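/- Let U ⊆ ℝⁿ be an open set and let f : U → ℝ be locally semiconcave on U. Then the set {x ∈ U : ∂_P f(x) = ∅} of points where f has no proximal subgradient has Lebesgue measure zero. -/

import Mathlib

open Metric MeasureTheory
open scoped RealInnerProductSpace Topology NNReal

set_option maxHeartbeats 1000000

section Aux

variable {n : ℕ}

local notation "E" => EuclideanSpace ℝ (Fin n)

open scoped RealInnerProductSpace NNReal Topology

/-- `p` is a (global) subgradient of `h` at `x`. -/
def IsSubgrad (h : E → ℝ) (x p : E) : Prop :=
  ∀ y, h x + ⟪p, y - x⟫ ≤ h y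

lemma isSubgrad_smul_comb {h : E → ℝ} {x p q : E} (hp : IsSubgrad h x p)
    (hq : IsSubgrad h x q) {t : ℝ} (ht0 : 0 ≤ t) (ht1 : t ≤ 1) :
    IsSubgrad h x ((1 - t) • p + t • q) := by
  intro y
  have h1 := hp y
  have h2 := hq y
  have : ⟪(1 - t) • p + t • q, y - x⟫ = (1 - t) * ⟪p, y - x⟫ + t * ⟪q, y - x⟫ := by
    rw [inner_add_left, real_inner_smul_left, real_inner_smul_left]
  nlinarith [h1, h2]

lemma isSubgrad_norm_le {h : E → ℝ} {L : ℝ≥0} (hl : LipschitzWith L h) {x p : E}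
    (hp : IsSubgrad h x p) : ‖p‖ ≤ L := by
  have h1 := hp (x + p)
  have h2 : |h (x + p) - h x| ≤ L * ‖p‖ := by
    have := hl.dist_le_mul (x + p) x
    rwa [Real.dist_eq, dist_eq_norm, add_sub_cancel_left] at this
  have h3 : ⟪p, x + p - x⟫ = ‖p‖ ^ 2 := by
    rw [add_sub_cancel_left, real_inner_self_eq_norm_sq]
  rw [h3] at h1
  rcases eq_or_lt_of_le (norm_nonneg p) with h0 | h0
  · rw [← h0]; positivity
  · nlinarith [abs_le.1 h2]

/-- Existence of subgradients for a globally convex continuous function. -/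
lemma exists_isSubgrad {h : E → ℝ} (hc : ConvexOn ℝ Set.univ h) (hcont : Continuous h)
    (x : E) : ∃ p, IsSubgrad h x p := by
  classical
  set s : Set (E × ℝ) := {q | h q.1 < q.2} with hs
  have hopen : IsOpen s := isOpen_lt (hcont.comp continuous_fst) continuous_snd
  have hconv : Convex ℝ s := by
    intro q hq q' hq' a b ha hb hab
    simp only [hs, Set.mem_setOf_eq] at hq hq' ⊢
    have h1 : h (a • q.1 + b • q'.1) ≤ a * h q.1 + b * h q'.1 := by
      simpa [smul_eq_mul] using hc.2 (Set.mem_univ q.1) (Set.mem_univ q'.1) ha hb hab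
    have h2 : (a • q + b • q').1 = a • q.1 + b • q'.1 := rfl
    have h3 : (a • q + b • q').2 = a * q.2 + b * q'.2 := rfl
    rw [h2, h3]
    rcases ha.eq_or_lt with rfl | ha'
    · have hb1 : b = 1 := by linarith
      subst hb1; simpa using hq'
    rcases hb.eq_or_lt with rfl | hb'
    · have ha1 : a = 1 := by linarith
      subst ha1; simpa using hq
    calc h (a • q.1 + b • q'.1) ≤ a * h q.1 + b * h q'.1 := h1
      _ < a * q.2 + b * q'.2 := by
        apply add_lt_add
        · exact mul_lt_mul_of_pos_left hq ha'
        · exact mul_lt_mul_of_pos_left hq' hb'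
  have hnotmem : (x, h x) ∉ s := by simp [hs]
  obtain ⟨ℓ, hℓ⟩ := geometric_hahn_banach_open_point hconv hopen hnotmem
  set a : ℝ := ℓ (0, 1) with ha
  have haneg : a < 0 := by
    have h1 : ((x : E), h x + 1) ∈ s := by simp [hs]
    have h2 := hℓ _ h1
    have h3 : ((x : E), h x + 1) = (x, h x) + (1:ℝ) • ((0:E), (1:ℝ)) := by
      simp [Prod.ext_iff]
    rw [h3, map_add, ℓ.map_smul] at h2
    simpa [ha] using h2
  have key : ∀ y : E, ℓ (y, h y) ≤ ℓ (x, h x) := by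
    intro y
    apply le_of_forall_pos_le_add
    intro δ hδ
    set ε : ℝ := δ / (-a) with hε
    have hεpos : 0 < ε := div_pos hδ (by linarith)
    have h1 : ((y : E), h y + ε) ∈ s := by simp [hs, hεpos]
    have h2 := hℓ _ h1
    have h3 : ((y : E), h y + ε) = (y, h y) + ε • ((0:E), (1:ℝ)) := by
      simp [Prod.ext_iff]
    rw [h3, map_add, ℓ.map_smul] at h2
    have h4 : ℓ (y, h y) + ε * a < ℓ (x, h x) := by simpa [ha, smul_eq_mul] using h2
    have h5 : ε * a = -δ := by
      have hane : a ≠ 0 := ne_of_lt haneg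
      rw [hε, div_neg, neg_mul, div_mul_eq_mul_div, mul_div_assoc, div_self hane, mul_one]
    linarith
  set ℓ₁ : E →L[ℝ] ℝ := ℓ.comp (ContinuousLinearMap.inl ℝ E ℝ) with hℓ₁
  have hdecomp : ∀ (y : E) (t : ℝ), ℓ (y, t) = ℓ₁ y + t * a := by
    intro y t
    have : ((y : E), t) = ((y:E), (0:ℝ)) + t • ((0:E), (1:ℝ)) := by
      simp [Prod.ext_iff]
    rw [this, map_add, ℓ.map_smul]
    simp only [hℓ₁, ha, smul_eq_mul, ContinuousLinearMap.comp_apply,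
      ContinuousLinearMap.inl_apply]
  refine ⟨(InnerProductSpace.toDual ℝ E).symm (-(a⁻¹) • ℓ₁), fun y => ?_⟩
  have hp : ⟪(InnerProductSpace.toDual ℝ E).symm (-(a⁻¹) • ℓ₁), y - x⟫
      = -(a⁻¹) * (ℓ₁ y - ℓ₁ x) := by
    rw [InnerProductSpace.toDual_symm_apply]
    simp [smul_eq_mul]
  rw [hp]
  have h6 := key y
  rw [hdecomp y (h y), hdecomp x (h x)] at h6
  have h7 : ℓ₁ y - ℓ₁ x ≤ (h x - h y) * a := by linarith
  have h8 : -(a⁻¹) * (ℓ₁ y - ℓ₁ x) ≤ -(a⁻¹) * ((h x - h y) * a) := by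
    apply mul_le_mul_of_nonneg_left h7
    have : 0 < a⁻¹ * -1 := by
      rw [mul_neg, mul_one, ← inv_neg]
      exact inv_pos.2 (by linarith)
    linarith
  have hane : a ≠ 0 := ne_of_lt haneg
  have h9 : -(a⁻¹) * ((h x - h y) * a) = h y - h x := by
    field_simp
    ring
  linarith

/-- The proximal objective. -/
private noncomputable def φP (h : E → ℝ) (z y : E) : ℝ := h y + ‖y - z‖ ^ 2 / 2

lemma exists_prox_min {h : E → ℝ} {L : ℝ≥0} (hl : LipschitzWith L h) (z : E) :
    ∃ x, ∀ y, φP h z x ≤ φP h z y := by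
  set R : ℝ := 2 * L + 1 with hR
  have hRpos : 0 < R := by positivity
  have hcont : Continuous (φP h z) := by
    unfold φP
    exact hl.continuous.add (by fun_prop)
  obtain ⟨x, hxmem, hxmin⟩ := (isCompact_closedBall z R).exists_isMinOn
    ⟨z, mem_closedBall_self hRpos.le⟩ hcont.continuousOn
  refine ⟨x, fun y => ?_⟩
  by_cases hy : y ∈ closedBall z R
  · exact hxmin hy
  · have hyz : R < ‖y - z‖ := by
      rw [mem_closedBall, dist_eq_norm] at hy
      linarith [not_le.1 hy]
    have hzx : φP h z x ≤ φP h z z := hxmin (mem_closedBall_self hRpos.le)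
    have hlip : |h z - h y| ≤ L * ‖y - z‖ := by
      have := hl.dist_le_mul z y
      rw [Real.dist_eq, dist_eq_norm] at this
      calc |h z - h y| ≤ (L:ℝ) * ‖z - y‖ := this
        _ = L * ‖y - z‖ := by rw [norm_sub_rev]
    have h1 : h y ≥ h z - L * ‖y - z‖ := by
      have := abs_le.1 hlip
      linarith [this.2]
    have h2 : φP h z z = h z := by unfold φP; simp
    have hL : (0:ℝ) ≤ L := L.coe_nonneg
    have : φP h z z < φP h z y := by
      unfold φP
      rw [sub_self, norm_zero]
      nlinarith [hyz, h1]
    linarith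

/-- The proximal map. -/
noncomputable def proxMap (h : E → ℝ) {L : ℝ≥0} (hl : LipschitzWith L h) (z : E) : E :=
  Classical.choose (exists_prox_min hl z)

lemma proxMap_spec {h : E → ℝ} {L : ℝ≥0} (hl : LipschitzWith L h) (z : E) :
    ∀ y, φP h z (proxMap h hl z) ≤ φP h z y :=
  Classical.choose_spec (exists_prox_min hl z)

/-- Minimizers of the proximal objective give subgradients. -/
lemma isSubgrad_of_prox_min {h : E → ℝ} (hc : ConvexOn ℝ Set.univ h) {z x : E}
    (hx : ∀ y, φP h z x ≤ φP h z y) : IsSubgrad h x (z - x) := by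
  intro y
  have key : ∀ t : ℝ, 0 < t → t ≤ 1 →
      ⟪z - x, y - x⟫ - t / 2 * ‖y - x‖ ^ 2 ≤ h y - h x := by
    intro t ht0 ht1
    have hmem := hx (x + t • (y - x))
    have hconv : h (x + t • (y - x)) ≤ (1 - t) * h x + t * h y := by
      have hx' : x + t • (y - x) = (1 - t) • x + t • y := by
        module
      rw [hx']
      have := hc.2 (Set.mem_univ x) (Set.mem_univ y) (by linarith : (0:ℝ) ≤ 1 - t)
        ht0.le (by ring)
      simpa [smul_eq_mul] using this
    have hnorm : ‖x + t • (y - x) - z‖ ^ 2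
        = ‖x - z‖ ^ 2 + 2 * t * ⟪x - z, y - x⟫ + t ^ 2 * ‖y - x‖ ^ 2 := by
      have : x + t • (y - x) - z = (x - z) + t • (y - x) := by abel
      rw [this, norm_add_sq_real, real_inner_smul_right, norm_smul]
      simp [abs_of_nonneg ht0.le]
      ring
    have hinner : ⟪z - x, y - x⟫ = -⟪x - z, y - x⟫ := by
      rw [show z - x = -(x - z) by abel, inner_neg_left]
    unfold φP at hmem
    rw [hnorm] at hmem
    have ht' : 0 < t := ht0
    rw [hinner]
    nlinarith [hmem]
  have lim : ∀ ε : ℝ, 0 < ε → ⟪z - x, y - x⟫ ≤ h y - h x + ε := by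
    intro ε hε
    set M := ‖y - x‖ ^ 2 / 2 + 1 with hM
    have hMpos : 0 < M := by positivity
    set t := min 1 (ε / M) with htdef
    have ht0 : 0 < t := lt_min one_pos (by positivity)
    have ht1 : t ≤ 1 := min_le_left _ _
    have := key t ht0 ht1
    have htM : t * (‖y - x‖ ^ 2 / 2) ≤ ε := by
      have h1 : t ≤ ε / M := min_le_right _ _
      have h2 : t * (‖y - x‖ ^ 2 / 2) ≤ (ε / M) * (‖y - x‖ ^ 2 / 2) := by
        apply mul_le_mul_of_nonneg_right h1 (by positivity)
      have h3 : (ε / M) * (‖y - x‖ ^ 2 / 2) ≤ ε := by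
        rw [div_mul_eq_mul_div, div_le_iff₀ hMpos]
        nlinarith
      linarith
    nlinarith
  have := le_of_forall_pos_le_add lim
  linarith

/-- Monotonicity-type inequality for subgradients. -/
lemma subgrad_mono {h : E → ℝ} {z z' x x' : E} (hx : IsSubgrad h x (z - x))
    (hx' : IsSubgrad h x' (z' - x')) : ‖x - x'‖ ^ 2 ≤ ⟪z - z', x - x'⟫ := by
  have h1 := hx x'
  have h2 := hx' x
  have e1 : ⟪z - x, x' - x⟫ = ⟪z, x'⟫ - ⟪z, x⟫ - ⟪x, x'⟫ + ⟪x, x⟫ := by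
    simp [inner_sub_left, inner_sub_right]; ring
  have e2 : ⟪z' - x', x - x'⟫ = ⟪z', x⟫ - ⟪z', x'⟫ - ⟪x', x⟫ + ⟪x', x'⟫ := by
    simp [inner_sub_left, inner_sub_right]; ring
  have e3 : ⟪z - z', x - x'⟫ = ⟪z, x⟫ - ⟪z, x'⟫ - ⟪z', x⟫ + ⟪z', x'⟫ := by
    simp [inner_sub_left, inner_sub_right]; ring
  have e4 : ‖x - x'‖ ^ 2 = ⟪x, x⟫ - 2 * ⟪x, x'⟫ + ⟪x', x'⟫ := by
    rw [← real_inner_self_eq_norm_sq]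
    simp only [inner_sub_left, inner_sub_right, real_inner_comm x' x]; ring
  have e5 : ⟪x', x⟫ = ⟪x, x'⟫ := real_inner_comm _ _
  linarith

lemma proxMap_of_isSubgrad {h : E → ℝ} (hc : ConvexOn ℝ Set.univ h) {L : ℝ≥0}
    (hl : LipschitzWith L h) {x p : E} (hp : IsSubgrad h x p) :
    proxMap h hl (x + p) = x := by
  set x' := proxMap h hl (x + p) with hx'
  have s1 : IsSubgrad h x' ((x + p) - x') :=
    isSubgrad_of_prox_min hc (proxMap_spec hl (x + p))
  have s2 : IsSubgrad h x ((x + p) - x) := by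
    simpa [add_sub_cancel_left] using hp
  have := subgrad_mono s1 s2
  have h0 : ‖x' - x‖ ^ 2 ≤ 0 := by
    simpa using this
  have : ‖x' - x‖ = 0 := by nlinarith [norm_nonneg (x' - x), sq_nonneg ‖x' - x‖]
  have := norm_eq_zero.1 this
  have : x' = x := by rwa [sub_eq_zero] at this
  exact this

lemma proxMap_lipschitz {h : E → ℝ} (hc : ConvexOn ℝ Set.univ h) {L : ℝ≥0}
    (hl : LipschitzWith L h) : LipschitzWith 1 (proxMap h hl) := by
  apply LipschitzWith.of_dist_le_mul
  intro z z'
  set x := proxMap h hl z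
  set x' := proxMap h hl z'
  have s1 : IsSubgrad h x (z - x) := isSubgrad_of_prox_min hc (proxMap_spec hl z)
  have s2 : IsSubgrad h x' (z' - x') := isSubgrad_of_prox_min hc (proxMap_spec hl z')
  have key := subgrad_mono s1 s2
  have hcs : ⟪z - z', x - x'⟫ ≤ ‖z - z'‖ * ‖x - x'‖ := real_inner_le_norm _ _
  rw [dist_eq_norm, dist_eq_norm]
  rcases eq_or_lt_of_le (norm_nonneg (x - x')) with h0 | h0
  · rw [← h0]; positivity
  · have : ‖x - x'‖ ≤ ‖z - z'‖ := by nlinarith [norm_nonneg (z - z')]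
    simpa using this

/-- A Lipschitz map on a Euclidean space sends null sets to null sets. -/
lemma volume_image_null_of_lipschitz {J : E → E} {K : ℝ≥0} (hJ : LipschitzWith K J)
    {s : Set E} (hs : volume s = 0) : volume (J '' s) = 0 := by
  classical
  set e := (MeasurableEquiv.toLp 2 (Fin n → ℝ)).symm with hedef
  have he : LipschitzWith 1 (⇑e) := by
    exact PiLp.lipschitzWith_ofLp 2 _
  have hesymm' := PiLp.lipschitzWith_toLp 2 (fun _ : Fin n => ℝ)
  obtain ⟨K', hesymm⟩ : ∃ K', LipschitzWith K' (⇑e.symm) :=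
    ⟨_, hesymm'⟩
  have hd0 : (0:ℝ) ≤ (n:ℝ) := Nat.cast_nonneg n
  -- step 1 : the image of `s` in the sup-metric space is volume-null
  have h1 : volume (⇑e '' s) = 0 := by
    set M := toMeasurable volume s with hM
    have hsub : ⇑e '' s ⊆ ⇑e.symm ⁻¹' M := by
      intro w hw
      obtain ⟨v, hv, rfl⟩ := hw
      simp only [Set.mem_preimage, MeasurableEquiv.symm_apply_apply]
      exact subset_toMeasurable _ _ hv
    have hMvol : volume (⇑e.symm ⁻¹' M) = 0 := by
      rw [((EuclideanSpace.volume_preserving_symm_measurableEquiv_toLp (Fin n)).symm e).measure_preimage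
        (measurableSet_toMeasurable _ _).nullMeasurableSet]
      rw [measure_toMeasurable]; exact hs
    exact measure_mono_null hsub hMvol
  -- step 2 : Hausdorff measure in the pi space
  have hpi : (μH[(n:ℝ)] : Measure ((Fin n) → ℝ)) = volume := by
    have := hausdorffMeasure_pi_real (ι := Fin n)
    simpa using this
  have h2 : μH[(n:ℝ)] (⇑e '' s) = 0 := by rw [hpi]; exact h1
  -- step 3 : Hausdorff measure of `s` in the Euclidean space
  have h3 : μH[(n:ℝ)] s = 0 := by
    have hss : s = ⇑e.symm '' (⇑e '' s) := by
      rw [← Set.image_comp]; simp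
    rw [hss]
    refine le_antisymm (le_trans (hesymm.hausdorffMeasure_image_le hd0 _) ?_) zero_le
    rw [h2, mul_zero]
  -- step 4 : Hausdorff measure of the image under J
  have h4 : μH[(n:ℝ)] (J '' s) = 0 := by
    refine le_antisymm (le_trans (hJ.hausdorffMeasure_image_le hd0 _) ?_) zero_le
    rw [h3, mul_zero]
  -- step 5 : back to volume
  have h5 : volume (⇑e '' (J '' s)) = 0 := by
    rw [← hpi]
    refine le_antisymm (le_trans (he.hausdorffMeasure_image_le hd0 _) ?_) zero_le
    rw [h4, mul_zero]
  have hss : J '' s = ⇑e.symm '' (⇑e '' (J '' s)) := by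
    rw [← Set.image_comp]; simp
  rw [hss]
  set B := ⇑e '' (J '' s) with hB
  set M := toMeasurable volume B with hM
  have hsub : ⇑e.symm '' B ⊆ ⇑e ⁻¹' M := by
    intro w hw
    obtain ⟨v, hv, rfl⟩ := hw
    simp only [Set.mem_preimage, MeasurableEquiv.apply_symm_apply]
    exact subset_toMeasurable _ _ hv
  have hMvol : volume (⇑e ⁻¹' M) = 0 := by
    rw [(EuclideanSpace.volume_preserving_symm_measurableEquiv_toLp (Fin n)).measure_preimage
      (measurableSet_toMeasurable _ _).nullMeasurableSet]
    rw [measure_toMeasurable]; exact h5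
  exact measure_mono_null hsub hMvol

/-- At a point where the prox map is differentiable with invertible differential, the
function has a quadratic upper bound supporting it. -/
lemma good_of_invertible {h : E → ℝ} (hc : ConvexOn ℝ Set.univ h) {L : ℝ≥0}
    (hl : LipschitzWith L h) {z : E} (hd : DifferentiableAt ℝ (proxMap h hl) z)
    (hdet : (fderiv ℝ (proxMap h hl) z).det ≠ 0) :
    ∃ c ρ : ℝ, 0 < c ∧ 0 < ρ ∧ ∀ y ∈ ball (proxMap h hl z) ρ,
      h y ≤ h (proxMap h hl z) + ⟪z - proxMap h hl z, y - proxMap h hl z⟫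
        + c * ‖y - proxMap h hl z‖ ^ 2 := by
  set J := proxMap h hl with hJdef
  set x := J z with hxdef
  set A := fderiv ℝ J z with hAdef
  -- invertibility gives a lower bound on `A`
  obtain ⟨σ, hσpos, hσ⟩ : ∃ σ : ℝ, 0 < σ ∧ ∀ v : E, σ * ‖v‖ ≤ ‖A v‖ := by
    obtain ⟨K₀, hanti⟩ : ∃ K₀, AntilipschitzWith K₀
        ⇑(A.toContinuousLinearEquivOfDetNeZero hdet) :=
      ⟨_, (A.toContinuousLinearEquivOfDetNeZero hdet).antilipschitz⟩
    refine ⟨1/((K₀:ℝ)+1), by positivity, fun v => ?_⟩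
    have h1 := hanti.le_mul_dist v 0
    simp only [dist_eq_norm, sub_zero, map_zero,
      ContinuousLinearMap.toContinuousLinearEquivOfDetNeZero_apply] at h1
    have hK0 : (0:ℝ) ≤ K₀ := K₀.coe_nonneg
    rw [div_mul_eq_mul_div, div_le_iff₀ (by positivity)]
    nlinarith [norm_nonneg (A v)]
  -- differentiability gives an approximation ball
  have hder : HasFDerivAt J A z := hd.hasFDerivAt
  obtain ⟨r, hr0, hball⟩ : ∃ r > 0, ∀ w ∈ ball z r,
      ‖J w - J z - A (w - z)‖ ≤ σ/2 * ‖w - z‖ := by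
    have hev := hder.isLittleO.def (by positivity : (0:ℝ) < σ/2)
    rw [Metric.eventually_nhds_iff_ball] at hev
    obtain ⟨r, hr0, hr⟩ := hev
    exact ⟨r, hr0, fun w hw => hr w hw⟩
  have lower : ∀ w ∈ ball z r, σ/2 * ‖w - z‖ ≤ ‖J w - x‖ := by
    intro w hw
    have h1 := hball w hw
    have h2 : ‖A (w - z)‖ ≤ ‖J w - J z - A (w - z)‖ + ‖J w - J z‖ := by
      have he : A (w - z) = (J w - J z) - (J w - J z - A (w - z)) := by abel
      calc ‖A (w - z)‖ = ‖(J w - J z) - (J w - J z - A (w - z))‖ := by rw [← he]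
        _ ≤ ‖J w - J z‖ + ‖J w - J z - A (w - z)‖ := norm_sub_le _ _
        _ = ‖J w - J z - A (w - z)‖ + ‖J w - J z‖ := by ring
    have h3 := hσ (w - z)
    rw [← hxdef] at h2
    linarith
  -- uniqueness of the subgradient at `x`
  have huniq : ∀ q, IsSubgrad h x q → q = z - x := by
    intro q hq
    by_contra hne
    have hzx : IsSubgrad h x (z - x) := isSubgrad_of_prox_min hc (proxMap_spec hl z)
    have hd0 : 0 < ‖x + q - z‖ := by
      rw [norm_pos_iff]
      intro h0
      apply hne
      have he : q - (z - x) = x + q - z := by abel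
      have h1 : q - (z - x) = 0 := by rw [he, h0]
      exact sub_eq_zero.1 h1
    set t := min 1 (r / (2 * ‖x + q - z‖)) with htdef
    have ht0 : 0 < t := lt_min one_pos (by positivity)
    have ht1 : t ≤ 1 := min_le_left _ _
    have hcomb : IsSubgrad h x ((1 - t) • (z - x) + t • q) :=
      isSubgrad_smul_comb hzx hq ht0.le ht1
    set zt := x + ((1 - t) • (z - x) + t • q) with hztdef
    have hJzt : J zt = x := proxMap_of_isSubgrad hc hl hcomb
    have hztz : zt - z = t • (x + q - z) := by
      rw [hztdef]; module
    have hztball : zt ∈ ball z r := by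
      rw [mem_ball, dist_eq_norm, hztz, norm_smul, Real.norm_eq_abs, abs_of_pos ht0]
      have h1 : t ≤ r / (2 * ‖x + q - z‖) := min_le_right _ _
      have h2 : t * ‖x + q - z‖ ≤ (r / (2 * ‖x + q - z‖)) * ‖x + q - z‖ :=
        mul_le_mul_of_nonneg_right h1 (norm_nonneg _)
      have h3 : (r / (2 * ‖x + q - z‖)) * ‖x + q - z‖ = r / 2 := by
        field_simp
      linarith
    have hlow := lower zt hztball
    rw [hJzt, sub_self, norm_zero, hztz, norm_smul, Real.norm_eq_abs, abs_of_pos ht0] at hlow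
    nlinarith [mul_pos hσpos (mul_pos ht0 hd0)]
  -- upper semicontinuity of the subdifferential
  have husc : ∃ ρ₁ : ℝ, 0 < ρ₁ ∧ ∀ y ∈ ball x ρ₁, ∀ q, IsSubgrad h y q →
      ‖q - (z - x)‖ < r/2 := by
    by_contra hcon
    push_neg at hcon
    have hseq : ∀ k : ℕ, ∃ yq : E × E, yq.1 ∈ ball x (1/((k:ℝ)+1)) ∧
        IsSubgrad h yq.1 yq.2 ∧ r/2 ≤ ‖yq.2 - (z - x)‖ := by
      intro k
      obtain ⟨y, hy, q, hq1, hq2⟩ := hcon (1/((k:ℝ)+1)) (by positivity)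
      exact ⟨(y, q), hy, hq1, hq2⟩
    choose Y hY1 hY2 hY3 using hseq
    have hqball : ∀ k, (Y k).2 ∈ closedBall (0:E) L := by
      intro k
      rw [mem_closedBall, dist_zero_right]
      exact isSubgrad_norm_le hl (hY2 k)
    obtain ⟨qs, _, φ, hφmono, hφtend⟩ :=
      (isCompact_closedBall (0:E) (L:ℝ)).tendsto_subseq hqball
    have hytend : Filter.Tendsto (fun k => (Y (φ k)).1) Filter.atTop (𝓝 x) := by
      rw [tendsto_iff_dist_tendsto_zero]
      apply squeeze_zero (fun k => dist_nonneg)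
        (fun k => (mem_ball.1 (hY1 (φ k))).le)
      have hb : Filter.Tendsto (fun k : ℕ => 1/((k:ℝ)+1)) Filter.atTop (𝓝 0) :=
        tendsto_one_div_add_atTop_nhds_zero_nat
      exact hb.comp hφmono.tendsto_atTop
    have hsubs : IsSubgrad h x qs := by
      intro u
      have hk : ∀ k, h (Y (φ k)).1 + ⟪(Y (φ k)).2, u - (Y (φ k)).1⟫ ≤ h u :=
        fun k => hY2 (φ k) u
      have hlim : Filter.Tendsto
          (fun k => h (Y (φ k)).1 + ⟪(Y (φ k)).2, u - (Y (φ k)).1⟫)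
          Filter.atTop (𝓝 (h x + ⟪qs, u - x⟫)) := by
        apply Filter.Tendsto.add
        · exact (hl.continuous.tendsto x).comp hytend
        · exact Filter.Tendsto.inner hφtend (tendsto_const_nhds.sub hytend)
      exact le_of_tendsto hlim (Filter.Eventually.of_forall hk)
    have hqs := huniq qs hsubs
    have hfar : r/2 ≤ ‖qs - (z - x)‖ := by
      have hnormtend : Filter.Tendsto (fun k => ‖(Y (φ k)).2 - (z - x)‖)
          Filter.atTop (𝓝 ‖qs - (z - x)‖) :=
        ((hφtend.sub tendsto_const_nhds).norm)
      exact ge_of_tendsto hnormtend (Filter.Eventually.of_forall (fun k => hY3 (φ k)))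
    rw [hqs, sub_self, norm_zero] at hfar
    linarith
  obtain ⟨ρ₁, hρ₁, husc⟩ := husc
  refine ⟨2/σ + 1, min ρ₁ (r/2), by positivity, by positivity, ?_⟩
  intro y hy
  obtain ⟨q, hq⟩ := exists_isSubgrad hc hl.continuous y
  have hy1 : y ∈ ball x ρ₁ := mem_ball.2 ((mem_ball.1 hy).trans_le (min_le_left _ _))
  have hy2 : ‖y - x‖ < r/2 := by
    have := (mem_ball.1 hy).trans_le (min_le_right _ _)
    rwa [dist_eq_norm] at this
  have hqclose := husc y hy1 q hq
  set w := y + q with hwdef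
  have hwz : w - z = (y - x) + (q - (z - x)) := by rw [hwdef]; abel
  have hw : w ∈ ball z r := by
    rw [mem_ball, dist_eq_norm, hwz]
    calc ‖(y - x) + (q - (z - x))‖ ≤ ‖y - x‖ + ‖q - (z - x)‖ := norm_add_le _ _
      _ < r/2 + r/2 := add_lt_add hy2 hqclose
      _ = r := by ring
  have hJw : J w = y := proxMap_of_isSubgrad hc hl hq
  have hlow := lower w hw
  rw [hJw] at hlow
  have hqbound : ‖q - (z - x)‖ ≤ (2/σ + 1) * ‖y - x‖ := by
    have h1 : ‖q - (z - x)‖ ≤ ‖w - z‖ + ‖y - x‖ := by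
      have he : q - (z - x) = (w - z) - (y - x) := by rw [hwz]; abel
      rw [he]
      exact norm_sub_le _ _
    have h2 : ‖w - z‖ ≤ (2/σ) * ‖y - x‖ := by
      rw [div_mul_eq_mul_div, le_div_iff₀ hσpos]
      nlinarith
    have h3 : (2/σ) * ‖y - x‖ + ‖y - x‖ = (2/σ + 1) * ‖y - x‖ := by ring
    linarith
  have hsup : h y ≤ h x + ⟪q, y - x⟫ := by
    have h1 := hq x
    have hinner : ⟪q, x - y⟫ = -⟪q, y - x⟫ := by
      rw [show x - y = -(y - x) by abel, inner_neg_right]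
    linarith
  have hsplit : ⟪q, y - x⟫ = ⟪z - x, y - x⟫ + ⟪q - (z - x), y - x⟫ := by
    rw [← inner_add_left]
    congr 1
    abel
  have hcs : ⟪q - (z - x), y - x⟫ ≤ ‖q - (z - x)‖ * ‖y - x‖ := real_inner_le_norm _ _
  have hfin : ‖q - (z - x)‖ * ‖y - x‖ ≤ (2/σ + 1) * ‖y - x‖ ^ 2 := by
    nlinarith [norm_nonneg (y - x)]
  linarith

/-- Main lemma: a globally convex Lipschitz function admits an upper quadratic support
(a proximal "supergradient") at almost every point. -/
lemma ae_good {h : E → ℝ} (hc : ConvexOn ℝ Set.univ h) {L : ℝ≥0}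
    (hl : LipschitzWith L h) :
    volume {x : E | ¬ ∃ (q : E) (c ρ : ℝ), 0 < c ∧ 0 < ρ ∧
      ∀ y ∈ ball x ρ, h y ≤ h x + ⟪q, y - x⟫ + c * ‖y - x‖ ^ 2} = 0 := by
  classical
  set J := proxMap h hl with hJdef
  have hJlip : LipschitzWith 1 J := proxMap_lipschitz hc hl
  set D1 : Set E := {z | ¬ DifferentiableAt ℝ J z} with hD1def
  set D2 : Set E := {z | DifferentiableAt ℝ J z ∧ (fderiv ℝ J z).det = 0} with hD2def
  have hD1 : volume D1 = 0 := by
    have hae : ∀ᵐ z ∂(volume : Measure E), DifferentiableAt ℝ J z :=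
      hJlip.ae_differentiableAt
    exact hae
  have hI1 : volume (J '' D1) = 0 := volume_image_null_of_lipschitz hJlip hD1
  have hI2 : volume (J '' D2) = 0 := by
    apply MeasureTheory.addHaar_image_eq_zero_of_det_fderivWithin_eq_zero
      (volume : Measure E) (f' := fun z => fderiv ℝ J z)
    · intro z hz
      exact (hz.1.hasFDerivAt).hasFDerivWithinAt
    · intro z hz
      exact hz.2
  refine measure_mono_null ?_ (measure_union_null hI1 hI2)
  intro x hx
  simp only [Set.mem_setOf_eq] at hx
  obtain ⟨p, hp⟩ := exists_isSubgrad hc hl.continuous x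
  have hJx : J (x + p) = x := proxMap_of_isSubgrad hc hl hp
  by_cases hz : DifferentiableAt ℝ J (x + p)
  · by_cases hdet : (fderiv ℝ J (x + p)).det = 0
    · exact Or.inr ⟨x + p, ⟨hz, hdet⟩, hJx⟩
    · exfalso
      apply hx
      obtain ⟨c, ρ, hc0, hρ0, hgood⟩ := good_of_invertible hc hl hz hdet
      rw [show proxMap h hl (x + p) = x from hJx] at hgood
      exact ⟨(x + p) - x, c, ρ, hc0, hρ0, hgood⟩
  · exact Or.inl ⟨x + p, hz, hJx⟩

/-- Extension of a convex Lipschitz function from a closed ball to the whole space. -/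
lemma exists_convex_lipschitz_extension {φ : E → ℝ} {x₀ : E} {R : ℝ} (hR : 0 < R)
    {L : ℝ≥0} (hc : ConvexOn ℝ (closedBall x₀ R) φ)
    (hl : LipschitzOnWith L φ (closedBall x₀ R)) :
    ∃ h : E → ℝ, ConvexOn ℝ Set.univ h ∧ LipschitzWith L h ∧
      Set.EqOn h φ (closedBall x₀ R) := by
  classical
  set B := closedBall x₀ R with hBdef
  have hx₀B : x₀ ∈ B := mem_closedBall_self hR.le
  have hdist : ∀ a ∈ B, ∀ b ∈ B, dist (φ a) (φ b) ≤ L * dist a b :=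
    lipschitzOnWith_iff_dist_le_mul.1 hl
  haveI : Nonempty ↑B := ⟨⟨x₀, hx₀B⟩⟩
  set g : E → ℝ := fun w => ⨅ v : B, (φ v + L * ‖w - v‖) with hgdef
  have hlb : ∀ (w : E) (v : B), φ x₀ - L * R ≤ φ (v:E) + L * ‖w - (v:E)‖ := by
    rintro w ⟨v, hv⟩
    have h1 : |φ x₀ - φ v| ≤ L * dist x₀ v := by
      rw [← Real.dist_eq]
      exact hdist x₀ hx₀B v hv
    have h2 : dist x₀ v ≤ R := by
      rw [dist_comm]; exact mem_closedBall.1 hv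
    have h3 : (0:ℝ) ≤ L := L.coe_nonneg
    have h4 := (abs_le.1 h1).2
    have h5 : (L:ℝ) * dist x₀ v ≤ L * R := mul_le_mul_of_nonneg_left h2 h3
    have h6 : (0:ℝ) ≤ L * ‖w - v‖ := by positivity
    simp only
    linarith
  have hbdd : ∀ w : E, BddBelow (Set.range fun v : B => φ (v:E) + L * ‖w - (v:E)‖) :=
    fun w => ⟨φ x₀ - L * R, by rintro t ⟨v, rfl⟩; exact hlb w v⟩
  have hle : ∀ (w : E) (v : B), g w ≤ φ (v:E) + L * ‖w - (v:E)‖ :=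
    fun w v => ciInf_le (hbdd w) v
  have hge : ∀ (w : E) (b : ℝ), (∀ v : B, b ≤ φ (v:E) + L * ‖w - (v:E)‖) → b ≤ g w :=
    fun w b hb => le_ciInf hb
  have heq : ∀ w ∈ B, g w = φ w := by
    intro w hw
    apply le_antisymm
    · have := hle w ⟨w, hw⟩
      simpa using this
    · apply hge
      rintro ⟨v, hv⟩
      have h1 : |φ w - φ v| ≤ L * dist w v := by
        rw [← Real.dist_eq]
        exact hdist w hw v hv
      have h4 := (abs_le.1 h1).2
      rw [dist_eq_norm] at h4
      simp only
      linarith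
  have hlipkey : ∀ w w' : E, g w ≤ g w' + L * ‖w - w'‖ := by
    intro w w'
    have h1 : g w - L * ‖w - w'‖ ≤ g w' := by
      apply hge
      rintro v
      have h2 := hle w v
      have h3 : ‖w - (v:E)‖ ≤ ‖w' - (v:E)‖ + ‖w - w'‖ := by
        have he : w - (v:E) = (w - w') + (w' - (v:E)) := by abel
        rw [he]
        calc ‖(w - w') + (w' - (v:E))‖ ≤ ‖w - w'‖ + ‖w' - (v:E)‖ := norm_add_le _ _
          _ = ‖w' - (v:E)‖ + ‖w - w'‖ := by ring
      have h5 : (0:ℝ) ≤ L := L.coe_nonneg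
      nlinarith
    linarith
  have hlip : LipschitzWith L g := by
    apply LipschitzWith.of_dist_le_mul
    intro w w'
    rw [Real.dist_eq, dist_eq_norm, abs_sub_le_iff]
    constructor
    · have := hlipkey w w'; linarith
    · have := hlipkey w' w
      rw [norm_sub_rev] at this
      linarith
  have hconv : ConvexOn ℝ Set.univ g := by
    refine ⟨convex_univ, ?_⟩
    intro w1 _ w2 _ a b ha hb hab
    apply le_of_forall_pos_le_add
    intro ε hε
    have hgw1 : g w1 < g w1 + ε/2 := by linarith
    have hgw2 : g w2 < g w2 + ε/2 := by linarith
    obtain ⟨v1, hv1⟩ := exists_lt_of_ciInf_lt hgw1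
    obtain ⟨v2, hv2⟩ := exists_lt_of_ciInf_lt hgw2
    have hv12 : a • (v1:E) + b • (v2:E) ∈ B :=
      (convex_closedBall x₀ R) v1.2 v2.2 ha hb hab
    have step1 : g (a • w1 + b • w2)
        ≤ φ (a • (v1:E) + b • (v2:E)) + L * ‖a • w1 + b • w2 - (a • (v1:E) + b • (v2:E))‖ := by
      have := hle (a • w1 + b • w2) ⟨_, hv12⟩
      simpa using this
    have step2 : φ (a • (v1:E) + b • (v2:E)) ≤ a * φ (v1:E) + b * φ (v2:E) := by
      simpa [smul_eq_mul] using hc.2 v1.2 v2.2 ha hb hab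
    have step3 : ‖a • w1 + b • w2 - (a • (v1:E) + b • (v2:E))‖
        ≤ a * ‖w1 - (v1:E)‖ + b * ‖w2 - (v2:E)‖ := by
      have he : a • w1 + b • w2 - (a • (v1:E) + b • (v2:E))
          = a • (w1 - (v1:E)) + b • (w2 - (v2:E)) := by module
      rw [he]
      calc ‖a • (w1 - (v1:E)) + b • (w2 - (v2:E))‖
          ≤ ‖a • (w1 - (v1:E))‖ + ‖b • (w2 - (v2:E))‖ := norm_add_le _ _
        _ = a * ‖w1 - (v1:E)‖ + b * ‖w2 - (v2:E)‖ := by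
            rw [norm_smul, norm_smul, Real.norm_eq_abs, Real.norm_eq_abs,
              abs_of_nonneg ha, abs_of_nonneg hb]
    have h5 : (0:ℝ) ≤ L := L.coe_nonneg
    have hfin : g (a • w1 + b • w2)
        ≤ a * (φ (v1:E) + L * ‖w1 - (v1:E)‖) + b * (φ (v2:E) + L * ‖w2 - (v2:E)‖) := by
      have : (L:ℝ) * ‖a • w1 + b • w2 - (a • (v1:E) + b • (v2:E))‖
          ≤ L * (a * ‖w1 - (v1:E)‖ + b * ‖w2 - (v2:E)‖) :=
        mul_le_mul_of_nonneg_left step3 h5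
      nlinarith [step1, step2]
    have hm1 : a * (φ (v1:E) + L * ‖w1 - (v1:E)‖) ≤ a * (g w1 + ε/2) :=
      mul_le_mul_of_nonneg_left hv1.le ha
    have hm2 : b * (φ (v2:E) + L * ‖w2 - (v2:E)‖) ≤ b * (g w2 + ε/2) :=
      mul_le_mul_of_nonneg_left hv2.le hb
    have hsum : a * (g w1 + ε/2) + b * (g w2 + ε/2)
        = a * g w1 + b * g w2 + (a + b) * (ε/2) := by ring
    rw [hab] at hsum
    have : a • g w1 + b • g w2 = a * g w1 + b * g w2 := by simp [smul_eq_mul]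
    rw [this]
    linarith
  exact ⟨g, hconv, hlip, fun w hw => heq w hw⟩

end Aux

/-- If `f` is locally semiconcave on an open set `U ⊆ ℝⁿ`, then the set of
points of `U` at which `f` has no proximal subgradient has Lebesgue measure zero. -/
theorem measure_zero_of_no_proximal_subgradient
    {n : ℕ} (U : Set (EuclideanSpace ℝ (Fin n))) (hU : IsOpen U)
    (f : EuclideanSpace ℝ (Fin n) → ℝ)
    (hsc : ∀ x ∈ U, ∃ V : Set (EuclideanSpace ℝ (Fin n)),
      IsOpen V ∧ Convex ℝ V ∧ x ∈ V ∧ V ⊆ U ∧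
      ∃ C : ℝ, 0 ≤ C ∧ ConcaveOn ℝ V (fun y => f y - C / 2 * ‖y‖ ^ 2)) :
    volume {x ∈ U | ¬ ∃ p : EuclideanSpace ℝ (Fin n), ∃ c ρ : ℝ, 0 < c ∧ 0 < ρ ∧
      ∀ y ∈ ball x ρ ∩ U, f y - f x - (inner ℝ p (y - x) : ℝ) ≥ -c * ‖y - x‖ ^ 2} = 0 := by
  classical
  set S := {x ∈ U | ¬ ∃ p : EuclideanSpace ℝ (Fin n), ∃ c ρ : ℝ, 0 < c ∧ 0 < ρ ∧
      ∀ y ∈ ball x ρ ∩ U, f y - f x - (inner ℝ p (y - x) : ℝ) ≥ -c * ‖y - x‖ ^ 2} with hSdef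
  apply measure_null_of_locally_null
  intro x₀ hx₀
  have hx₀U : x₀ ∈ U := hx₀.1
  obtain ⟨V, hVopen, hVconv, hx₀V, hVU, C, hC0, hconc⟩ := hsc x₀ hx₀U
  obtain ⟨ε₀, hε₀, hballV⟩ := Metric.isOpen_iff.1 hVopen x₀ hx₀V
  set ε := ε₀ / 4 with hεdef
  have hεpos : 0 < ε := by positivity
  set φ : EuclideanSpace ℝ (Fin n) → ℝ := fun y => C / 2 * ‖y‖ ^ 2 - f y with hφdef
  have hφconv : ConvexOn ℝ V φ := by
    have h1 := hconc.neg
    have h2 : φ = -fun y => (f y - C / 2 * ‖y‖ ^ 2) := by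
      funext y
      simp only [hφdef, Pi.neg_apply]
      ring
    rw [h2]
    exact h1
  have hcont : ContinuousOn φ V := hφconv.continuousOn hVopen
  have hball2 : ball x₀ (2 * ε) ⊆ V := by
    apply Set.Subset.trans _ hballV
    apply ball_subset_ball
    rw [hεdef]; linarith
  have hcball2 : closedBall x₀ (2 * ε) ⊆ V := by
    apply Set.Subset.trans _ hballV
    apply closedBall_subset_ball
    rw [hεdef]; linarith
  have hφconv' : ConvexOn ℝ (ball x₀ (2 * ε)) φ :=
    hφconv.subset hball2 (convex_ball _ _)
  have hbd : Bornology.IsBounded (φ '' ball x₀ (2 * ε)) := by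
    have hK : IsCompact (φ '' closedBall x₀ (2 * ε)) :=
      (isCompact_closedBall x₀ (2 * ε)).image_of_continuousOn (hcont.mono hcball2)
    exact hK.isBounded.subset (Set.image_mono ball_subset_closedBall)
  obtain ⟨K, hK⟩ := hφconv'.exists_lipschitzOnWith_of_isBounded
    (show (3/2) * ε < 2 * ε by linarith) hbd
  have hKball : LipschitzOnWith K φ (closedBall x₀ ε) :=
    hK.mono (closedBall_subset_ball (by linarith))
  have hφconvB : ConvexOn ℝ (closedBall x₀ ε) φ :=
    hφconv.subset ((closedBall_subset_ball (by linarith : ε < 2*ε)).trans hball2)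
      (convex_closedBall _ _)
  obtain ⟨h, hhconv, hhlip, hheq⟩ :=
    exists_convex_lipschitz_extension hεpos hφconvB hKball
  refine ⟨S ∩ ball x₀ (ε/2), inter_mem_nhdsWithin _ (ball_mem_nhds _ (by positivity)), ?_⟩
  apply measure_mono_null ?_ (ae_good hhconv hhlip)
  rintro x ⟨hxS, hxball⟩
  simp only [Set.mem_setOf_eq]
  intro hgood
  obtain ⟨q, c, ρ, hc0, hρ0, hineq⟩ := hgood
  rw [hSdef] at hxS
  apply hxS.2
  refine ⟨C • x - q, c, min ρ (ε/2), hc0, lt_min hρ0 (by positivity), ?_⟩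
  intro y hy
  have hyx : dist y x < min ρ (ε/2) := mem_ball.1 hy.1
  have hyball : y ∈ closedBall x₀ ε := by
    rw [mem_closedBall]
    calc dist y x₀ ≤ dist y x + dist x x₀ := dist_triangle _ _ _
      _ ≤ ε/2 + ε/2 := by
          have h1 : dist y x < ε/2 := hyx.trans_le (min_le_right _ _)
          have h2 : dist x x₀ < ε/2 := mem_ball.1 hxball
          linarith
      _ = ε := by ring
  have hxball' : x ∈ closedBall x₀ ε := by
    rw [mem_closedBall]
    have h2 : dist x x₀ < ε/2 := mem_ball.1 hxball
    linarith
  have hineq' := hineq y (mem_ball.2 (hyx.trans_le (min_le_left _ _)))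
  rw [hheq hyball, hheq hxball'] at hineq'
  have hnorm : ‖y‖ ^ 2 = ‖x‖ ^ 2 + 2 * ⟪x, y - x⟫ + ‖y - x‖ ^ 2 := by
    have he : y = x + (y - x) := by abel
    conv_lhs => rw [he]
    rw [norm_add_sq_real]
  have hinner : ⟪C • x - q, y - x⟫ = C * ⟪x, y - x⟫ - ⟪q, y - x⟫ := by
    rw [inner_sub_left, real_inner_smul_left]
  have hq2 : (0:ℝ) ≤ C / 2 * ‖y - x‖ ^ 2 := by positivity
  rw [hφdef] at hineq'
  simp only at hineq'
  have hgoal : f y - f x - ⟪C • x - q, y - x⟫ ≥ -c * ‖y - x‖ ^ 2 := by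
    rw [hinner]
    nlinarith [hineq', hnorm]
  exact hgoal
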